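/- Let X be a sampling set for PW_1(ℝ) with lower frame bound A > 0, and suppose Δ_X := inf over nonzero finitely supported Gaussian-integer sequences n of dist(n, Range(C_X)) is positive. Then for every h ∈ PW_1(ℝ) satisfying ‖M_{1,X} h‖_{ℓ²} < 2Δ_X, one has M_{1,X} h = C_X h as sequences, and consequently ‖h‖_{L²} ≤ A^{-1/2} ‖M_{1,X} h‖_{ℓ²}. -/

import Mathlib

open MeasureTheory Real

/-- The Paley–Wiener space of bandwidth `Ω`. -/
def PW (Ω : ℝ) : Set (ℝ → ℂ) :=
  {f | ∃ g : ℝ → ℂ, MeasureTheory.MemLp g 2 volume ∧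
    (∀ ξ : ℝ, ξ ∉ Set.Icc (-(Ω/2)) (Ω/2) → g ξ = 0) ∧
    ∀ x : ℝ, f x = ∫ ξ : ℝ, g ξ * Complex.exp (2 * Real.pi * Complex.I * x * ξ)}

/-- Centered λ-folding of a real number. -/
noncomputable def fold (lam x : ℝ) : ℝ :=
  2 * lam * (Int.fract (x / (2 * lam) + 1 / 2) - 1 / 2)

/-- Componentwise centered λ-folding of a complex number. -/
noncomputable def foldC (lam : ℝ) (z : ℂ) : ℂ :=
  (fold lam z.re : ℂ) + (fold lam z.im : ℂ) * Complex.I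

/-- A finitely supported complex sequence is Gaussian-integer valued. -/
def IsGaussian (n : ℤ →₀ ℂ) : Prop := ∀ k : ℤ, ∃ a b : ℤ, n k = (a : ℂ) + (b : ℂ) * Complex.I

/-- If `X` is a sampling set for `PW_1(ℝ)` with lower frame bound `A > 0` and
`Δ_X > 0` is the distance between the nonzero finitely supported Gaussian-integer
sequences and the range of the sampling operator, then any `h ∈ PW_1(ℝ)` with
`‖M_{1,X} h‖ < 2Δ_X` has unfolded samples, `M_{1,X} h = C_X h`, and
consequently `‖h‖_{L²} ≤ A^{-1/2} ‖M_{1,X} h‖`. -/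
lemma fold_one_eq (t : ℝ) : fold 1 t = t - 2 * ⌊t / 2 + 1 / 2⌋ := by
  have h2 : (2:ℝ) * 1 = 2 := by norm_num
  rw [fold, h2, Int.fract]; ring

lemma abs_fold_one_le (t : ℝ) : |fold 1 t| ≤ |t| := by
  rcases lt_or_ge (|t|) 1 with h | h
  · rw [abs_lt] at h
    have h0 : ⌊t / 2 + 1 / 2⌋ = 0 := by
      rw [Int.floor_eq_zero_iff]
      constructor <;> [linarith [h.1]; linarith [h.2]]
    rw [fold_one_eq, h0]; simp
  · have h1 := Int.fract_nonneg (t / (2*1) + 1/2)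
    have h2 := Int.fract_lt_one (t / (2*1) + 1/2)
    have : |fold 1 t| ≤ 1 := by
      rw [fold, abs_le]; constructor <;> nlinarith
    linarith

lemma normsq' (w : ℂ) : ‖w‖^2 = w.re^2 + w.im^2 := by
  rw [Complex.sq_norm, Complex.normSq_apply]; ring

lemma foldC_re (z : ℂ) : (foldC 1 z).re = fold 1 z.re := by simp [foldC]
lemma foldC_im (z : ℂ) : (foldC 1 z).im = fold 1 z.im := by simp [foldC]

lemma norm_foldC_le (z : ℂ) : ‖foldC 1 z‖ ≤ ‖z‖ := by
  have h1 : ‖foldC 1 z‖^2 ≤ ‖z‖^2 := by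
    rw [normsq', normsq', foldC_re, foldC_im]
    have b1 : fold 1 z.re^2 ≤ z.re^2 := by
      rw [← sq_abs (fold 1 z.re), ← sq_abs z.re]
      exact pow_le_pow_left₀ (abs_nonneg _) (abs_fold_one_le z.re) 2
    have b2 : fold 1 z.im^2 ≤ z.im^2 := by
      rw [← sq_abs (fold 1 z.im), ← sq_abs z.im]
      exact pow_le_pow_left₀ (abs_nonneg _) (abs_fold_one_le z.im) 2
    linarith
  nlinarith [norm_nonneg (foldC 1 z), norm_nonneg z]

lemma gauss_small (a b : ℤ) (h : ‖(a:ℂ) + (b:ℂ)*Complex.I‖ < 1) : a = 0 ∧ b = 0 := by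
  have hn : ‖(a:ℂ) + (b:ℂ)*Complex.I‖^2 = (a:ℝ)^2 + (b:ℝ)^2 := by
    rw [normsq']; simp
  have h2 : (a:ℝ)^2 + (b:ℝ)^2 < 1 := by
    nlinarith [norm_nonneg ((a:ℂ) + (b:ℂ)*Complex.I)]
  constructor
  · by_contra hc
    have h1 : (1:ℤ) ≤ |a| := Int.one_le_abs hc
    have : (1:ℝ) ≤ |(a:ℝ)| := by exact_mod_cast (by simpa using h1 : (1:ℤ) ≤ |a|)
    nlinarith [sq_abs (a:ℝ), sq_nonneg (b:ℝ)]
  · by_contra hc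
    have h1 : (1:ℤ) ≤ |b| := Int.one_le_abs hc
    have : (1:ℝ) ≤ |(b:ℝ)| := by exact_mod_cast h1
    nlinarith [sq_abs (b:ℝ), sq_nonneg (a:ℝ)]

lemma sub_foldC (z : ℂ) : z - foldC 1 z =
    2*((⌊z.re/2+1/2⌋:ℂ) + (⌊z.im/2+1/2⌋:ℂ)*Complex.I) := by
  rw [foldC, fold_one_eq z.re, fold_one_eq z.im]
  apply Complex.ext <;> simp <;> push_cast <;> ring

lemma PW_half {h : ℝ → ℂ} (hh : h ∈ PW 1) : (fun t => h t / 2) ∈ PW 1 := by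
  obtain ⟨g, hg1, hg2, hg3⟩ := hh
  refine ⟨fun ξ => g ξ / 2, by simpa [div_eq_inv_mul] using hg1.const_mul ((2:ℂ)⁻¹),
    fun ξ hξ => by simp [hg2 ξ hξ], fun t => ?_⟩
  simp only [hg3 t, ← integral_div]
  congr 1; funext ξ; ring

theorem stmt14 (A : ℝ) (hA : 0 < A) (x : ℤ → ℝ)
    (hframe : ∀ f ∈ PW 1,
      A * ((eLpNorm f 2 volume).toReal) ^ 2 ≤ ∑' k : ℤ, ‖f (x k)‖ ^ 2)
    (Δ : ℝ)
    (hΔdef : Δ = sInf {r : ℝ | ∃ n : ℤ →₀ ℂ, ∃ f ∈ PW 1, IsGaussian n ∧ n ≠ 0 ∧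
      r = Real.sqrt (∑' k : ℤ, ‖(n k : ℂ) - f (x k)‖ ^ 2)})
    (hΔpos : 0 < Δ)
    (h : ℝ → ℂ) (hh : h ∈ PW 1)
    (hsmall : Real.sqrt (∑' k : ℤ, ‖foldC 1 (h (x k))‖ ^ 2) < 2 * Δ) :
    (∀ k : ℤ, foldC 1 (h (x k)) = h (x k)) ∧
    (eLpNorm h 2 volume).toReal ≤
      A ^ (-(1/2) : ℝ) * Real.sqrt (∑' k : ℤ, ‖foldC 1 (h (x k))‖ ^ 2) := by
  classical
  -- every element of the set is ≥ Δ
  have hle : ∀ r ∈ {r : ℝ | ∃ n : ℤ →₀ ℂ, ∃ f ∈ PW 1, IsGaussian n ∧ n ≠ 0 ∧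
      r = Real.sqrt (∑' k : ℤ, ‖(n k : ℂ) - f (x k)‖ ^ 2)}, Δ ≤ r := by
    intro r hr
    rw [hΔdef]
    refine csInf_le ⟨0, fun s hs => ?_⟩ hr
    obtain ⟨n, f, hf, hg, hn0, rfl⟩ := hs
    exact Real.sqrt_nonneg _
  have hhalf : (fun t => h t / 2) ∈ PW 1 := PW_half hh
  -- Step 1 : samples are square-summable
  have hmem1 : Real.sqrt (∑' k : ℤ, ‖((Finsupp.single (0:ℤ) (1:ℂ)) k : ℂ) -
      (fun t => h t / 2) (x k)‖ ^ 2) ∈ {r : ℝ | ∃ n : ℤ →₀ ℂ, ∃ f ∈ PW 1, IsGaussian n ∧ n ≠ 0 ∧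
      r = Real.sqrt (∑' k : ℤ, ‖(n k : ℂ) - f (x k)‖ ^ 2)} := by
    refine ⟨Finsupp.single 0 1, fun t => h t / 2, hhalf, ?_, ?_, rfl⟩
    · intro k
      by_cases hk : k = 0
      · subst hk
        exact ⟨1, 0, by rw [Finsupp.single_eq_same]; simp⟩
      · exact ⟨0, 0, by rw [Finsupp.single_eq_of_ne' (Ne.symm hk)]; simp⟩
    · intro h0
      have := Finsupp.single_eq_zero.mp h0
      exact one_ne_zero this
  have hsum_u : Summable (fun k : ℤ => ‖((Finsupp.single (0:ℤ) (1:ℂ)) k : ℂ) -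
      h (x k) / 2‖ ^ 2) := by
    by_contra hns
    have h0 := hle _ hmem1
    rw [tsum_eq_zero_of_not_summable hns] at h0
    rw [Real.sqrt_zero] at h0
    linarith
  have hsum_h : Summable (fun k : ℤ => ‖h (x k)‖ ^ 2) := by
    have hw : Summable (fun k : ℤ => ‖h (x k) / 2‖ ^ 2 -
        ‖((Finsupp.single (0:ℤ) (1:ℂ)) k : ℂ) - h (x k) / 2‖ ^ 2) := by
      apply summable_of_ne_finset_zero (s := ({0} : Finset ℤ))
      intro k hk
      have hk0 : (0:ℤ) ≠ k := fun he => hk (by simp [← he])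
      rw [Finsupp.single_eq_of_ne' hk0]
      simp
    have hv : Summable (fun k : ℤ => ‖h (x k) / 2‖ ^ 2) := by
      have := hw.add hsum_u
      refine this.congr fun k => ?_
      ring
    refine (hv.mul_left 4).congr fun k => ?_
    rw [norm_div]
    have : ‖(2:ℂ)‖ = 2 := by norm_num
    rw [this]; ring
  have hsum_f : Summable (fun k : ℤ => ‖foldC 1 (h (x k))‖ ^ 2) := by
    refine hsum_h.of_nonneg_of_le (fun k => sq_nonneg _) fun k => ?_
    exact pow_le_pow_left₀ (norm_nonneg _) (norm_foldC_le _) 2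
  -- Step 2 : pointwise, folding is identity where samples are small
  have key : ∀ k : ℤ, ‖h (x k)‖ < 1 → foldC 1 (h (x k)) = h (x k) := by
    intro k hk
    set z := h (x k) with hz
    have hid := sub_foldC z
    have h2 : ‖z - foldC 1 z‖ ≤ 2 * ‖z‖ := by
      calc ‖z - foldC 1 z‖ ≤ ‖z‖ + ‖foldC 1 z‖ := norm_sub_le _ _
      _ ≤ 2 * ‖z‖ := by linarith [norm_foldC_le z]
    have h3 : ‖z - foldC 1 z‖ =
        2 * ‖(⌊z.re/2+1/2⌋:ℂ) + (⌊z.im/2+1/2⌋:ℂ)*Complex.I‖ := by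
      rw [hid, norm_mul]; norm_num
    have hn : ‖(⌊z.re/2+1/2⌋:ℂ) + (⌊z.im/2+1/2⌋:ℂ)*Complex.I‖ < 1 := by linarith
    obtain ⟨ha, hb⟩ := gauss_small _ _ hn
    have hzz : z - foldC 1 z = 0 := by rw [hid, ha, hb]; simp
    have := sub_eq_zero.mp hzz
    exact this.symm
  -- Step 3 : the bad set is finite
  have hfin : {k : ℤ | foldC 1 (h (x k)) ≠ h (x k)}.Finite := by
    have h1 : {k : ℤ | ¬ ‖h (x k)‖ ^ 2 < 1}.Finite := by
      have htend := hsum_h.tendsto_cofinite_zero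
      have hev : ∀ᶠ k in Filter.cofinite, ‖h (x k)‖ ^ 2 < 1 :=
        htend.eventually_lt_const (by norm_num)
      exact hev
    refine h1.subset fun k hk => ?_
    intro hlt
    apply hk
    apply key
    nlinarith [norm_nonneg (h (x k))]
  -- the Gaussian-integer residual sequence
  let n : ℤ →₀ ℂ := ⟨hfin.toFinset, fun k => (h (x k) - foldC 1 (h (x k))) / 2, by
    intro k
    rw [Set.Finite.mem_toFinset, Set.mem_setOf_eq]
    constructor
    · intro hk hzero
      rw [div_eq_zero_iff] at hzero
      rcases hzero with hz | hz
      · exact hk (sub_eq_zero.mp hz).symm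
      · norm_num at hz
    · intro hne heq
      apply hne
      show (h (x k) - foldC 1 (h (x k))) / 2 = 0
      rw [heq]
      simp⟩
  have hnk : ∀ k : ℤ, n k = (h (x k) - foldC 1 (h (x k))) / 2 := fun k => rfl
  -- Step 4 : main conclusion (folding is identity everywhere)
  have hfold : ∀ k : ℤ, foldC 1 (h (x k)) = h (x k) := by
    by_contra hcon
    push_neg at hcon
    obtain ⟨k0, hk0⟩ := hcon
    have hn0 : n ≠ 0 := by
      intro h0
      apply hk0
      have hthis := Finsupp.ext_iff.mp h0 k0
      rw [hnk k0] at hthis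
      simp only [Finsupp.coe_zero, Pi.zero_apply] at hthis
      rw [div_eq_zero_iff] at hthis
      rcases hthis with hz | hz
      · exact (sub_eq_zero.mp hz).symm
      · norm_num at hz
    have hgauss : IsGaussian n := by
      intro k
      refine ⟨⌊(h (x k)).re/2+1/2⌋, ⌊(h (x k)).im/2+1/2⌋, ?_⟩
      rw [hnk k, sub_foldC (h (x k))]
      ring
    have hmem : Real.sqrt (∑' k : ℤ, ‖(n k : ℂ) - (fun t => h t / 2) (x k)‖ ^ 2) ∈
        {r : ℝ | ∃ n : ℤ →₀ ℂ, ∃ f ∈ PW 1, IsGaussian n ∧ n ≠ 0 ∧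
        r = Real.sqrt (∑' k : ℤ, ‖(n k : ℂ) - f (x k)‖ ^ 2)} :=
      ⟨n, fun t => h t / 2, hhalf, hgauss, hn0, rfl⟩
    have hΔle := hle _ hmem
    have heq : ∀ k : ℤ, ‖(n k : ℂ) - (fun t => h t / 2) (x k)‖ ^ 2 =
        (1/4) * ‖foldC 1 (h (x k))‖ ^ 2 := by
      intro k
      rw [hnk k]
      have he : (h (x k) - foldC 1 (h (x k))) / 2 - (fun t => h t / 2) (x k) =
          -(foldC 1 (h (x k))) / 2 := by
        show (h (x k) - foldC 1 (h (x k))) / 2 - h (x k) / 2 = _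
        ring
      rw [he, norm_div, norm_neg]
      have : ‖(2:ℂ)‖ = 2 := by norm_num
      rw [this]; ring
    rw [tsum_congr heq, tsum_mul_left] at hΔle
    rw [Real.sqrt_mul (by norm_num : (0:ℝ) ≤ 1/4)] at hΔle
    have h14 : Real.sqrt (1/4) = 1/2 := by
      rw [show (1/4:ℝ) = (1/2)^2 by norm_num, Real.sqrt_sq (by norm_num : (0:ℝ) ≤ 1/2)]
    rw [h14] at hΔle
    linarith
  refine ⟨hfold, ?_⟩
  -- Step 5 : norm bound
  have heqsum : ∑' k : ℤ, ‖h (x k)‖ ^ 2 = ∑' k : ℤ, ‖foldC 1 (h (x k))‖ ^ 2 :=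
    tsum_congr fun k => by rw [hfold k]
  have hframe' := hframe h hh
  rw [heqsum] at hframe'
  set t := (eLpNorm h 2 volume).toReal with ht
  set F := ∑' k : ℤ, ‖foldC 1 (h (x k))‖ ^ 2 with hF
  have hF0 : 0 ≤ F := tsum_nonneg fun k => sq_nonneg _
  have ht0 : (0:ℝ) ≤ t := ENNReal.toReal_nonneg
  have hsA : 0 < Real.sqrt A := Real.sqrt_pos.mpr hA
  have hkey : Real.sqrt A * t ≤ Real.sqrt F := by
    have h1 : (Real.sqrt A * t) ^ 2 ≤ Real.sqrt F ^ 2 := by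
      rw [mul_pow, Real.sq_sqrt hA.le, Real.sq_sqrt hF0]
      exact hframe'
    calc Real.sqrt A * t = Real.sqrt ((Real.sqrt A * t) ^ 2) :=
          (Real.sqrt_sq (by positivity)).symm
    _ ≤ Real.sqrt (Real.sqrt F ^ 2) := Real.sqrt_le_sqrt h1
    _ = Real.sqrt F := Real.sqrt_sq (Real.sqrt_nonneg F)
  have hrpow : A ^ (-(1/2) : ℝ) = (Real.sqrt A)⁻¹ := by
    rw [Real.rpow_neg hA.le, Real.sqrt_eq_rpow]
  rw [hrpow, inv_mul_eq_div, le_div_iff₀ hsA]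
  linarith [hkey]
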